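/- With notation as in the construction of the primitive ladder elements, one has the closed formula P_n = Σ_{a_1 + 2a_2 + ... + n a_n = n} (−1)^{a_1+...+a_n+1} ((a_1+...+a_n−1)!/(a_1!...a_n!)) l_1^{a_1} ... l_n^{a_n}. -/

import Mathlib

open scoped TensorProduct
open MvPolynomial

/-- `Psi n ∈ ℚ[X_1,...,X_n]` is
`Ψ_n = Σ_{a₁ + 2a₂ + ... + n aₙ = n} X₁^{a₁}...Xₙ^{aₙ}/(a₁!...aₙ!)`,
where `X_{i+1}` is the variable `MvPolynomial.X (i : Fin n)`. -/
noncomputable def Psi (n : ℕ) : MvPolynomial (Fin n) ℚ :=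
  ∑ a ∈ (Fintype.piFinset fun _ : Fin n => Finset.range (n + 1)).filter
      (fun a => ∑ i, (i.1 + 1) * a i = n),
    ((∏ i, ((a i).factorial : ℚ))⁻¹) • ∏ i, MvPolynomial.X i ^ a i



namespace LadderAux

open PowerSeries Finset

variable {H : Type*} [CommRing H] [Algebra ℚ H]

/-- weighted series of powers of `f`: `∑ k, w k • f^k` (coefficientwise, valid when
`f` has zero constant term). -/
noncomputable def rees (w : ℕ → ℚ) (f : H⟦X⟧) : H⟦X⟧ :=
  PowerSeries.mk fun q => ∑ k ∈ Finset.range (q + 1), w k • PowerSeries.coeff (R := H) q (f ^ k)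

lemma coeff_rees (w : ℕ → ℚ) (f : H⟦X⟧) (q : ℕ) :
    PowerSeries.coeff (R := H) q (rees w f) = ∑ k ∈ range (q + 1), w k • PowerSeries.coeff (R := H) q (f ^ k) :=
  coeff_mk _ _

lemma coeff_pow_eq_zero {f : H⟦X⟧} (hf : PowerSeries.constantCoeff (R := H) f = 0) {m k : ℕ} (h : m < k) :
    PowerSeries.coeff (R := H) m (f ^ k) = 0 :=
  X_pow_dvd_iff.mp (pow_dvd_pow_of_dvd (X_dvd_iff.mpr hf) k) m h

lemma constantCoeff_rees (w : ℕ → ℚ) (f : H⟦X⟧) :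
    PowerSeries.constantCoeff (R := H) (rees w f) = w 0 • 1 := by
  rw [← coeff_zero_eq_constantCoeff_apply, coeff_rees]
  simp

lemma coeff_mul_rees (w : ℕ → ℚ) {g : H⟦X⟧} (hg : PowerSeries.constantCoeff (R := H) g = 0) (f : H⟦X⟧) (n : ℕ) :
    PowerSeries.coeff (R := H) n (f * rees w g) = ∑ k ∈ range (n + 1), w k • PowerSeries.coeff (R := H) n (f * g ^ k) := by
  rw [PowerSeries.coeff_mul]
  have h1 : ∀ p ∈ antidiagonal n, PowerSeries.coeff (R := H) p.1 f * PowerSeries.coeff (R := H) p.2 (rees w g)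
      = ∑ k ∈ range (n + 1), w k • (PowerSeries.coeff (R := H) p.1 f * PowerSeries.coeff (R := H) p.2 (g ^ k)) := by
    intro p hp
    have hp2 : p.2 ≤ n := by
      have := mem_antidiagonal.mp hp; omega
    rw [coeff_rees, Finset.mul_sum,
      Finset.sum_subset (Finset.range_subset_range.mpr (by omega : p.2 + 1 ≤ n + 1))
        (fun k _ hk => by
          rw [Finset.mem_range, not_lt] at hk
          rw [coeff_pow_eq_zero hg (by omega), smul_zero, mul_zero])]
    exact Finset.sum_congr rfl fun k _ => mul_smul_comm _ _ _
  rw [Finset.sum_congr rfl h1, Finset.sum_comm]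
  refine Finset.sum_congr rfl fun k _ => ?_
  rw [← Finset.smul_sum, PowerSeries.coeff_mul]

lemma coeff_derivativeFun' (u : H⟦X⟧) (n : ℕ) :
    PowerSeries.coeff (R := H) n (derivativeFun u) = ((n : ℚ) + 1) • PowerSeries.coeff (R := H) (n + 1) u := by
  rw [← show PowerSeries.derivative H u = derivativeFun u from rfl, coeff_derivativeFun,
    Algebra.smul_def, mul_comm]
  congr 1
  rw [map_add, map_natCast, map_one]

lemma derivativeFun_pow_succ (f : H⟦X⟧) (k : ℕ) :
    derivativeFun (f ^ (k + 1)) = (k + 1) • (f ^ k * derivativeFun f) := by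
  induction k with
  | zero => simp
  | succ k ih =>
    rw [pow_succ, derivativeFun_mul, ih]
    simp only [smul_eq_mul, nsmul_eq_mul]
    push_cast
    ring

lemma ode_unique {u v h : H⟦X⟧} (hu : derivativeFun u = h * u) (hv : derivativeFun v = h * v)
    (h0 : PowerSeries.constantCoeff (R := H) u = PowerSeries.constantCoeff (R := H) v) : u = v := by
  ext n
  induction n using Nat.strong_induction_on with
  | _ n ih =>
    match n with
    | 0 => simpa [coeff_zero_eq_constantCoeff] using h0
    | n + 1 =>
      have key : PowerSeries.coeff (R := H) n (derivativeFun u) = PowerSeries.coeff (R := H) n (derivativeFun v) := by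
        rw [hu, hv, PowerSeries.coeff_mul, PowerSeries.coeff_mul]
        refine Finset.sum_congr rfl fun p hp => ?_
        have hp2 : p.2 ≤ n := by have := mem_antidiagonal.mp hp; omega
        rw [ih p.2 (by omega)]
      rw [coeff_derivativeFun', coeff_derivativeFun'] at key
      have hne : ((n : ℚ) + 1) ≠ 0 := by positivity
      calc PowerSeries.coeff (R := H) (n+1) u = ((n:ℚ)+1)⁻¹ • (((n:ℚ)+1) • PowerSeries.coeff (R := H) (n+1) u) :=
            (inv_smul_smul₀ hne _).symm
        _ = ((n:ℚ)+1)⁻¹ • (((n:ℚ)+1) • PowerSeries.coeff (R := H) (n+1) v) := by rw [key]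
        _ = PowerSeries.coeff (R := H) (n+1) v := inv_smul_smul₀ hne _


lemma coeff_one_ne {n : ℕ} (hn : n ≠ 0) : PowerSeries.coeff (R := H) n (1 : H⟦X⟧) = 0 := by
  rw [PowerSeries.coeff_one, if_neg hn]

lemma derivativeFun_rees {g : H⟦X⟧} (hg : PowerSeries.constantCoeff (R := H) g = 0)
    (w v : ℕ → ℚ) (hwv : ∀ k, w (k + 1) = v k / (k + 1)) :
    derivativeFun (rees w g) = derivativeFun g * rees v g := by
  ext n
  rw [coeff_derivativeFun', coeff_rees, Finset.smul_sum, coeff_mul_rees v hg,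
    Finset.sum_range_succ']
  have h0 : ((n : ℚ) + 1) • w 0 • PowerSeries.coeff (R := H) (n + 1) (g ^ 0) = 0 := by
    rw [pow_zero, coeff_one_ne (Nat.succ_ne_zero n), smul_zero, smul_zero]
  rw [h0, add_zero]
  refine Finset.sum_congr rfl fun k _ => ?_
  -- coeff n (dg * g^k) = ((k+1)⁻¹ * (n+1)) • coeff (n+1) (g^(k+1))
  have hd : ((k : ℚ) + 1) • PowerSeries.coeff (R := H) n (derivativeFun g * g ^ k)
      = ((n : ℚ) + 1) • PowerSeries.coeff (R := H) (n + 1) (g ^ (k + 1)) := by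
    rw [← coeff_derivativeFun', derivativeFun_pow_succ]
    rw [map_nsmul, mul_comm]
    rw [← Nat.cast_smul_eq_nsmul ℚ]
    push_cast
    ring_nf
  have hkne : ((k : ℚ) + 1) ≠ 0 := by positivity
  have : PowerSeries.coeff (R := H) n (derivativeFun g * g ^ k)
      = ((k : ℚ) + 1)⁻¹ • (((n : ℚ) + 1) • PowerSeries.coeff (R := H) (n + 1) (g ^ (k + 1))) := by
    rw [← hd, inv_smul_smul₀ hkne]
  rw [this, hwv k, smul_smul, smul_smul, smul_smul]
  congr 1
  push_cast
  field_simp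

noncomputable def expS (f : H⟦X⟧) : H⟦X⟧ := rees (fun k => ((k.factorial : ℚ))⁻¹) f

noncomputable def logS (f : H⟦X⟧) : H⟦X⟧ := rees (fun k => (-1 : ℚ) ^ (k + 1) / k) f

noncomputable def geomS (f : H⟦X⟧) : H⟦X⟧ := rees (fun k => (-1 : ℚ) ^ k) f

lemma constantCoeff_logS (f : H⟦X⟧) : PowerSeries.constantCoeff (R := H) (logS f) = 0 := by
  rw [logS, constantCoeff_rees]
  norm_num

lemma constantCoeff_expS (f : H⟦X⟧) : PowerSeries.constantCoeff (R := H) (expS f) = 1 := by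
  rw [expS, constantCoeff_rees]
  norm_num

lemma one_add_mul_geomS {f : H⟦X⟧} (hf : PowerSeries.constantCoeff (R := H) f = 0) :
    (1 + f) * geomS f = 1 := by
  ext n
  have h1 : ∀ k, PowerSeries.coeff (R := H) n (f * f ^ k) = PowerSeries.coeff (R := H) n (f ^ (k + 1)) := by
    intro k; rw [← pow_succ']
  rw [add_mul, one_mul, map_add, geomS, coeff_rees, coeff_mul_rees _ hf,
    Finset.sum_range_succ', Finset.sum_range_succ]
  simp only [h1]
  rw [coeff_pow_eq_zero hf (Nat.lt_succ_self n), smul_zero, add_zero]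
  have h3 : ∑ k ∈ range n, (-1 : ℚ) ^ (k + 1) • PowerSeries.coeff (R := H) n (f ^ (k + 1))
      + ∑ k ∈ range n, (-1 : ℚ) ^ k • PowerSeries.coeff (R := H) n (f ^ (k + 1)) = 0 := by
    rw [← Finset.sum_add_distrib]
    refine Finset.sum_eq_zero fun k _ => ?_
    rw [pow_succ, mul_neg_one, neg_smul, neg_add_cancel]
  rw [add_right_comm, h3, zero_add, pow_zero, pow_zero, one_smul]

lemma expS_logS {f : H⟦X⟧} (hf : PowerSeries.constantCoeff (R := H) f = 0) : expS (logS f) = 1 + f := by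
  have hlf : PowerSeries.constantCoeff (R := H) (logS f) = 0 := constantCoeff_logS f
  have hexp : derivativeFun (expS (logS f)) = derivativeFun (logS f) * expS (logS f) := by
    refine derivativeFun_rees hlf _ _ fun k => ?_
    rw [Nat.factorial_succ]
    push_cast
    rw [mul_inv]
    field_simp
  have hlog : derivativeFun (logS f) = derivativeFun f * geomS f := by
    refine derivativeFun_rees hf _ _ fun k => ?_
    push_cast
    rw [pow_succ, pow_succ]
    field_simp
  refine ode_unique (h := derivativeFun f * geomS f) ?_ ?_ ?_
  · rw [hexp, hlog]
  · have hd1 : derivativeFun (1 + f : H⟦X⟧) = derivativeFun f := by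
      rw [derivativeFun_add, derivativeFun_one, zero_add]
    rw [hd1, mul_assoc, mul_comm (geomS f), one_add_mul_geomS hf, mul_one]
  · rw [constantCoeff_expS, map_add, map_one, hf, add_zero]


lemma coeff_pow_piAntidiag {f : H⟦X⟧} (hf : PowerSeries.constantCoeff (R := H) f = 0) (n k : ℕ) :
    PowerSeries.coeff (R := H) n (f ^ k) =
      ∑ b ∈ ((Finset.range n).piAntidiag k).filter
          (fun b => ∑ i ∈ Finset.range n, (i + 1) * b i = n),
        (Nat.multinomial (Finset.range n) b : ℚ) •
          ∏ i ∈ Finset.range n, PowerSeries.coeff (R := H) (i + 1) f ^ b i := by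
  classical
  set T : H⟦X⟧ := ∑ i ∈ Finset.range n, PowerSeries.C (R := H) (PowerSeries.coeff (R := H) (i + 1) f) * PowerSeries.X ^ (i + 1) with hT
  have hcT : ∀ m ≤ n, PowerSeries.coeff (R := H) m T = PowerSeries.coeff (R := H) m f := by
    intro m hm
    rw [hT, map_sum]
    simp only [PowerSeries.coeff_C_mul, PowerSeries.coeff_X_pow]
    rcases Nat.eq_zero_or_pos m with h0 | hpos
    · subst h0
      rw [Finset.sum_eq_zero fun i _ => by rw [if_neg (by omega), mul_zero]]
      rw [coeff_zero_eq_constantCoeff_apply, hf]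
    · rw [Finset.sum_eq_single (m - 1)]
      · have hm1 : m - 1 + 1 = m := by omega
        rw [if_pos hm1.symm, mul_one, hm1]
      · intro i hi hne
        rw [if_neg (by omega), mul_zero]
      · intro hm'
        exact absurd (Finset.mem_range.mpr (by omega)) hm'
  have hagree : PowerSeries.coeff (R := H) n (f ^ k) = PowerSeries.coeff (R := H) n (T ^ k) := by
    have h1 : (X : H⟦X⟧) ^ (n + 1) ∣ f - T := X_pow_dvd_iff.mpr (fun m hm => by
      rw [map_sub, hcT m (by omega), sub_self])
    have h2 := X_pow_dvd_iff.mp (h1.trans (sub_dvd_pow_sub_pow f T k)) n (Nat.lt_succ_self n)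
    rw [map_sub, sub_eq_zero] at h2
    exact h2
  rw [hagree, hT, Finset.sum_pow_eq_sum_piAntidiag, map_sum, Finset.sum_filter]
  refine Finset.sum_congr rfl fun b hb => ?_
  have hprod : ∏ i ∈ Finset.range n, (PowerSeries.C (R := H) (PowerSeries.coeff (R := H) (i + 1) f) * PowerSeries.X ^ (i + 1)) ^ b i
      = PowerSeries.C (R := H) (∏ i ∈ Finset.range n, PowerSeries.coeff (R := H) (i + 1) f ^ b i)
          * PowerSeries.X ^ (∑ i ∈ Finset.range n, (i + 1) * b i) := by
    rw [map_prod, ← Finset.prod_pow_eq_pow_sum, ← Finset.prod_mul_distrib]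
    refine Finset.prod_congr rfl fun i _ => ?_
    rw [mul_pow, ← map_pow, ← pow_mul]
  rw [hprod, ← map_natCast (PowerSeries.C (R := H)) (Nat.multinomial (Finset.range n) b), ← mul_assoc, ← map_mul,
    PowerSeries.coeff_C_mul, PowerSeries.coeff_X_pow]
  by_cases hcond : ∑ i ∈ Finset.range n, (i + 1) * b i = n
  · rw [if_pos hcond.symm, if_pos hcond, mul_one, ← nsmul_eq_mul,
      ← Nat.cast_smul_eq_nsmul ℚ]
  · rw [if_neg (fun h => hcond h.symm), if_neg hcond, mul_zero]

lemma coeff_pow_SF {f : H⟦X⟧} (hf : PowerSeries.constantCoeff (R := H) f = 0) {n : ℕ} (hn : 1 ≤ n) (k : ℕ) :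
    PowerSeries.coeff (R := H) n (f ^ k) =
      ∑ a ∈ ((Fintype.piFinset fun _ : Fin n => Finset.range (n + 1)).filter
          (fun a => ∑ i, (i.1 + 1) * a i = n)).filter (fun a => ∑ i, a i = k),
        (Nat.multinomial Finset.univ a : ℚ) • ∏ i : Fin n, PowerSeries.coeff (R := H) (i.1 + 1) f ^ a i := by
  classical
  have hconvS : ∀ (a : Fin n → ℕ) (F : ℕ → ℕ → ℕ),
      ∑ j ∈ Finset.range n, F j (if h : j < n then a ⟨j, h⟩ else 0) = ∑ i : Fin n, F i.1 (a i) := by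
    intro a F
    rw [← Fin.sum_univ_eq_sum_range (fun j => F j (if h : j < n then a ⟨j, h⟩ else 0)) n]
    exact Finset.sum_congr rfl fun i _ => by simp [i.isLt]
  rw [coeff_pow_piAntidiag hf n k]
  refine Finset.sum_nbij' (i := fun b (i : Fin n) => b i.1)
    (j := fun a j => if h : j < n then a ⟨j, h⟩ else 0) ?_ ?_ ?_ ?_ ?_
  · intro b hb
    rw [Finset.mem_filter, Finset.mem_piAntidiag] at hb
    obtain ⟨⟨hsum, hsupp⟩, hcond⟩ := hb
    rw [Finset.mem_filter, Finset.mem_filter, Fintype.mem_piFinset]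
    refine ⟨⟨fun i => ?_, ?_⟩, ?_⟩
    · rw [Finset.mem_range]
      have h1 : (i.1 + 1) * b i.1 ≤ n :=
        le_trans (Finset.single_le_sum (f := fun j => (j + 1) * b j)
          (fun j _ => Nat.zero_le _) (Finset.mem_range.mpr i.isLt)) (le_of_eq hcond)
      have h2 : b i.1 ≤ (i.1 + 1) * b i.1 := Nat.le_mul_of_pos_left _ (Nat.succ_pos _)
      exact Nat.lt_succ_of_le (le_trans h2 h1)
    · exact (Fin.sum_univ_eq_sum_range (fun j => (j + 1) * b j) n).trans hcond
    · exact (Fin.sum_univ_eq_sum_range b n).trans hsum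
  · intro a ha
    rw [Finset.mem_filter, Finset.mem_filter, Fintype.mem_piFinset] at ha
    obtain ⟨⟨hmem, hcond⟩, hsum⟩ := ha
    rw [Finset.mem_filter, Finset.mem_piAntidiag]
    refine ⟨⟨?_, fun j hj => ?_⟩, ?_⟩
    · exact (hconvS a (fun _ m => m)).trans hsum
    · rw [Finset.mem_range]
      by_contra hlt
      exact hj (dif_neg (by omega))
    · exact (hconvS a (fun j m => (j + 1) * m)).trans hcond
  · intro b hb
    rw [Finset.mem_filter, Finset.mem_piAntidiag] at hb
    obtain ⟨⟨hsum, hsupp⟩, hcond⟩ := hb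
    funext j
    show (if h : j < n then b ↑(⟨j, h⟩ : Fin n) else 0) = b j
    by_cases h : j < n
    · rw [dif_pos h]
    · rw [dif_neg h]
      by_contra h0
      exact h (Finset.mem_range.mp (hsupp j fun hz => h0 hz.symm))
  · intro a ha
    funext i
    show (if h : i.1 < n then a ⟨i.1, h⟩ else 0) = a i
    rw [dif_pos i.isLt]
  · intro b hb
    have hm : Nat.multinomial (Finset.range n) b
        = Nat.multinomial Finset.univ (fun i : Fin n => b i.1) := by
      rw [Nat.multinomial, Nat.multinomial, Fin.sum_univ_eq_sum_range b n,
        Fin.prod_univ_eq_prod_range (fun j => (b j).factorial) n]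
    rw [hm, Fin.prod_univ_eq_prod_range (fun j => PowerSeries.coeff (R := H) (j + 1) f ^ b j) n]


/-! ### Specialization to the statement's indexing -/

lemma sum_le_of_weighted {n : ℕ} {a : Fin n → ℕ} (ha : ∑ i, (i.1 + 1) * a i = n) :
    ∑ i, a i ≤ n :=
  le_trans (Finset.sum_le_sum fun i _ => Nat.le_mul_of_pos_left _ (Nat.succ_pos _))
    (le_of_eq ha)

lemma one_le_sum_of_weighted {n : ℕ} (hn : 1 ≤ n) {a : Fin n → ℕ}
    (ha : ∑ i, (i.1 + 1) * a i = n) : 1 ≤ ∑ i, a i := by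
  by_contra h
  push_neg at h
  have h0 : ∀ i, a i = 0 := by
    intro i
    exact (Finset.sum_eq_zero_iff.mp (Nat.lt_one_iff.mp h)) i (Finset.mem_univ i)
  rw [Finset.sum_congr rfl fun i _ => by rw [h0 i, mul_zero]] at ha
  rw [Finset.sum_const_zero] at ha
  omega

lemma prod_factorial_ne_zero {n : ℕ} (a : Fin n → ℕ) :
    (∏ i, ((a i).factorial : ℚ)) ≠ 0 :=
  Finset.prod_ne_zero_iff.mpr fun i _ =>
    Nat.cast_ne_zero.mpr (Nat.factorial_ne_zero _)

lemma scalar_log (k : ℕ) (K F1 F2 P : ℚ) (hfac : K * F1 = F2) (hK : K ≠ 0) (hP : P ≠ 0) :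
    (-1 : ℚ) ^ (k + 1) / K * (F2 / P) = (-1) ^ (k + 1) * F1 / P := by
  rw [← hfac, div_mul_div_comm, div_eq_div_iff (mul_ne_zero hK hP) hP]
  ring

lemma scalar_exp (F2 P : ℚ) (hF : F2 ≠ 0) (hP : P ≠ 0) : F2⁻¹ * (F2 / P) = P⁻¹ := by
  field_simp

lemma multinomialQ {n : ℕ} (a : Fin n → ℕ) :
    (Nat.multinomial Finset.univ a : ℚ)
      = ((∑ i, a i).factorial : ℚ) / ∏ i, ((a i).factorial : ℚ) := by
  rw [eq_div_iff (prod_factorial_ne_zero a), mul_comm]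
  exact_mod_cast Nat.multinomial_spec Finset.univ a

lemma rees_coeff_formula (w : ℕ → ℚ) {f : H⟦X⟧} (hf : PowerSeries.constantCoeff (R := H) f = 0) {n : ℕ}
    (hn : 1 ≤ n) :
    PowerSeries.coeff (R := H) n (rees w f)
      = ∑ a ∈ (Fintype.piFinset fun _ : Fin n => Finset.range (n + 1)).filter
          (fun a => ∑ i, (i.1 + 1) * a i = n),
        (w (∑ i, a i) * (Nat.multinomial Finset.univ a : ℚ)) •
          ∏ i : Fin n, PowerSeries.coeff (R := H) (i.1 + 1) f ^ a i := by
  rw [coeff_rees]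
  rw [← Finset.sum_fiberwise_of_maps_to (g := fun a : Fin n → ℕ => ∑ i, a i)
    (t := Finset.range (n + 1))
    (fun a ha => Finset.mem_range.mpr
      (Nat.lt_succ_of_le (sum_le_of_weighted (Finset.mem_filter.mp ha).2)))]
  refine Finset.sum_congr rfl fun k hk => ?_
  rw [coeff_pow_SF hf hn k, Finset.smul_sum]
  refine Finset.sum_congr rfl fun a ha => ?_
  rw [smul_smul, ← (Finset.mem_filter.mp ha).2]

/-- The power series `∑_{m ≥ 1} l_m X^m`. -/
noncomputable def Lser (l : ℕ → H) : H⟦X⟧ :=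
  PowerSeries.mk fun m => if m = 0 then 0 else l m

lemma constantCoeff_Lser (l : ℕ → H) : PowerSeries.constantCoeff (R := H) (Lser l) = 0 := by
  rw [← coeff_zero_eq_constantCoeff_apply, Lser, coeff_mk, if_pos rfl]

lemma coeff_Lser_succ (l : ℕ → H) (m : ℕ) : PowerSeries.coeff (R := H) (m + 1) (Lser l) = l (m + 1) := by
  rw [Lser, coeff_mk, if_neg (Nat.succ_ne_zero m)]

lemma coeff_Lser_of_pos (l : ℕ → H) {m : ℕ} (hm : 1 ≤ m) : PowerSeries.coeff (R := H) m (Lser l) = l m := by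
  rw [Lser, coeff_mk, if_neg (by omega)]

/-- Closed formula for the coefficients of `log(1 + L)`. -/
lemma logS_coeff_closed (l : ℕ → H) {n : ℕ} (hn : 1 ≤ n) :
    PowerSeries.coeff (R := H) n (logS (Lser l)) =
      ∑ a ∈ (Fintype.piFinset fun _ : Fin n => Finset.range (n + 1)).filter
          (fun a => ∑ i, (i.1 + 1) * a i = n),
        ((-1 : ℚ) ^ ((∑ i, a i) + 1) *
            (((∑ i, a i) - 1).factorial : ℚ) / ∏ i, ((a i).factorial : ℚ)) •
          ∏ i, l (i.1 + 1) ^ a i := by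
  rw [logS, rees_coeff_formula _ (constantCoeff_Lser l) hn]
  refine Finset.sum_congr rfl fun a ha => ?_
  have hk1 : 1 ≤ ∑ i, a i :=
    one_le_sum_of_weighted hn (Finset.mem_filter.mp ha).2
  have hpr : ∏ i : Fin n, PowerSeries.coeff (R := H) (i.1 + 1) (Lser l) ^ a i = ∏ i, l (i.1 + 1) ^ a i :=
    Finset.prod_congr rfl fun i _ => by rw [coeff_Lser_succ l i.1]
  rw [hpr, multinomialQ]
  congr 1
  have hfac : ((∑ i, a i : ℕ) : ℚ) * (((∑ i, a i) - 1).factorial : ℚ)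
      = ((∑ i, a i).factorial : ℚ) := by
    exact_mod_cast Nat.mul_factorial_pred (by omega)
  have hks : ((∑ i, a i : ℕ) : ℚ) ≠ 0 := Nat.cast_ne_zero.mpr (by omega)
  exact scalar_log _ _ _ _ _ hfac hks (prod_factorial_ne_zero a)

/-- Expansion of `exp(log(1+L)) = 1 + L` in the statement's indexing. -/
lemma exp_expand (l : ℕ → H) {n : ℕ} (hn : 1 ≤ n) :
    l n = ∑ a ∈ (Fintype.piFinset fun _ : Fin n => Finset.range (n + 1)).filter
          (fun a => ∑ i, (i.1 + 1) * a i = n),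
        ((∏ i, ((a i).factorial : ℚ))⁻¹) •
          ∏ i, (PowerSeries.coeff (R := H) (i.1 + 1) (logS (Lser l))) ^ a i := by
  have h1 : PowerSeries.coeff (R := H) n (expS (logS (Lser l))) = l n := by
    rw [expS_logS (constantCoeff_Lser l), map_add, PowerSeries.coeff_one, if_neg (by omega),
      coeff_Lser_of_pos l hn, zero_add]
  rw [← h1, expS, rees_coeff_formula _ (constantCoeff_logS _) hn]
  refine Finset.sum_congr rfl fun a ha => ?_
  congr 1
  rw [multinomialQ]
  exact scalar_exp _ _ (Nat.cast_ne_zero.mpr (Nat.factorial_ne_zero _))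
    (prod_factorial_ne_zero a)

lemma logS_coeff_one (l : ℕ → H) : PowerSeries.coeff (R := H) 1 (logS (Lser l)) = l 1 := by
  have h1 : PowerSeries.coeff (R := H) 1 (expS (logS (Lser l))) = l 1 := by
    rw [expS_logS (constantCoeff_Lser l), map_add, PowerSeries.coeff_one, if_neg one_ne_zero,
      coeff_Lser_of_pos l le_rfl, zero_add]
  rw [← h1, expS, coeff_rees, Finset.sum_range_succ, Finset.sum_range_one]
  rw [pow_zero, PowerSeries.coeff_one, if_neg one_ne_zero, smul_zero, zero_add, pow_one]
  norm_num


/-! ### The distinguished index and splitting off the top term -/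

/-- The tuple `(0, ..., 0, 1)` selecting `l_n` itself. -/
def deltaF (n : ℕ) : Fin n → ℕ := fun i => if i.1 + 1 = n then 1 else 0

lemma deltaF_mem {n : ℕ} (hn : 1 ≤ n) :
    deltaF n ∈ (Fintype.piFinset fun _ : Fin n => Finset.range (n + 1)).filter
      (fun a => ∑ i, (i.1 + 1) * a i = n) := by
  have i₀ : Fin n := ⟨n - 1, by omega⟩
  rw [Finset.mem_filter, Fintype.mem_piFinset]
  constructor
  · intro i
    rw [Finset.mem_range, deltaF]
    split <;> omega
  · have hkey : ∀ i : Fin n, (i.1 + 1) * deltaF n i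
        = if i = (⟨n - 1, by omega⟩ : Fin n) then n else 0 := by
      intro i
      rw [deltaF]
      by_cases h : i.1 + 1 = n
      · rw [if_pos h, if_pos (show i = ⟨n - 1, by omega⟩ from Fin.ext (by simp; omega)),
          mul_one, h]
      · rw [if_neg h, if_neg (fun he => h (by rw [he]; simp; omega)), mul_zero]
    rw [Finset.sum_congr rfl fun i _ => hkey i,
      Finset.sum_ite_eq' Finset.univ (⟨n - 1, by omega⟩ : Fin n) fun _ => n,
      if_pos (Finset.mem_univ _)]

lemma eq_deltaF {n : ℕ} (hn : 1 ≤ n) {a : Fin n → ℕ}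
    (hc : ∑ i, (i.1 + 1) * a i = n) (h0 : a ⟨n - 1, by omega⟩ ≠ 0) : a = deltaF n := by
  set i₀ : Fin n := ⟨n - 1, by omega⟩ with hi₀def
  have hi₀ : i₀.1 + 1 = n := by rw [hi₀def]; simp only [Fin.val_mk]; omega
  have ht : (i₀.1 + 1) * a i₀ ≤ n :=
    le_trans (Finset.single_le_sum (f := fun i : Fin n => (i.1 + 1) * a i)
      (fun _ _ => Nat.zero_le _) (Finset.mem_univ i₀)) (le_of_eq hc)
  rw [hi₀] at ht
  have ha1 : a i₀ = 1 := by
    have h1 : 1 ≤ a i₀ := Nat.one_le_iff_ne_zero.mpr h0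
    have h2 : a i₀ ≤ 1 := by
      by_contra hgt
      push_neg at hgt
      have := Nat.mul_le_mul_left n hgt
      omega
    omega
  have htot : (i₀.1 + 1) * a i₀ + ∑ i ∈ Finset.univ.erase i₀, (i.1 + 1) * a i
      = ∑ i : Fin n, (i.1 + 1) * a i :=
    Finset.add_sum_erase Finset.univ (fun i : Fin n => (i.1 + 1) * a i) (Finset.mem_univ i₀)
  have hfi : (i₀.1 + 1) * a i₀ = n := by rw [hi₀, ha1, mul_one]
  rw [hfi, hc] at htot
  have hrest : ∑ i ∈ Finset.univ.erase i₀, (i.1 + 1) * a i = 0 := by omega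
  funext i
  by_cases h : i = i₀
  · subst h
    rw [ha1, deltaF]
    exact (if_pos hi₀).symm
  · have hz : (i.1 + 1) * a i = 0 :=
      (Finset.sum_eq_zero_iff.mp hrest) i (Finset.mem_erase.mpr ⟨h, Finset.mem_univ i⟩)
    have hz' : a i = 0 := by
      rcases Nat.mul_eq_zero.mp hz with h' | h'
      · omega
      · exact h'
    rw [hz', deltaF]
    exact (if_neg fun he => h (Fin.ext (by simp [hi₀def]; omega))).symm

lemma sum_split {n : ℕ} (hn : 1 ≤ n) (g : ℕ → H) :
    ∑ a ∈ (Fintype.piFinset fun _ : Fin n => Finset.range (n + 1)).filter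
        (fun a => ∑ i, (i.1 + 1) * a i = n),
      ((∏ i, ((a i).factorial : ℚ))⁻¹) •
        ∏ i, (if i.1 + 1 = n then 0 else g (i.1 + 1)) ^ a i
    = (∑ a ∈ (Fintype.piFinset fun _ : Fin n => Finset.range (n + 1)).filter
        (fun a => ∑ i, (i.1 + 1) * a i = n),
      ((∏ i, ((a i).factorial : ℚ))⁻¹) • ∏ i, g (i.1 + 1) ^ a i) - g n := by
  set i₀ : Fin n := ⟨n - 1, by omega⟩ with hi₀def
  have hi₀ : i₀.1 + 1 = n := by rw [hi₀def]; simp only [Fin.val_mk]; omega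
  set S := (Fintype.piFinset fun _ : Fin n => Finset.range (n + 1)).filter
      (fun a => ∑ i, (i.1 + 1) * a i = n) with hS
  have hmem : deltaF n ∈ S := deltaF_mem hn
  rw [← Finset.add_sum_erase S _ hmem, ← Finset.add_sum_erase S
    (fun a => ((∏ i, ((a i).factorial : ℚ))⁻¹) • ∏ i, g (i.1 + 1) ^ a i) hmem]
  have hδ1 : deltaF n i₀ = 1 := if_pos hi₀
  have hfac1 : (∏ i, (((deltaF n) i).factorial : ℚ))⁻¹ = 1 := by
    rw [Finset.prod_eq_one fun i _ => ?_, inv_one]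
    rw [deltaF]
    split <;> norm_num
  have hterm0 : ∏ i, (if i.1 + 1 = n then 0 else g (i.1 + 1)) ^ deltaF n i = 0 :=
    Finset.prod_eq_zero (Finset.mem_univ i₀) (by rw [if_pos hi₀, hδ1, pow_one])
  have htermg : ∏ i, g (i.1 + 1) ^ deltaF n i = g n := by
    rw [Finset.prod_eq_single i₀ ?_ ?_]
    · rw [hδ1, pow_one, hi₀]
    · intro i _ hne
      rw [show deltaF n i = 0 from if_neg fun h => hne (Fin.ext (by simp [hi₀def]; omega)),
        pow_zero]
    · intro h
      exact absurd (Finset.mem_univ i₀) h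
  have hsame : ∑ a ∈ S.erase (deltaF n),
      ((∏ i, ((a i).factorial : ℚ))⁻¹) •
        ∏ i, (if i.1 + 1 = n then 0 else g (i.1 + 1)) ^ a i
      = ∑ a ∈ S.erase (deltaF n),
      ((∏ i, ((a i).factorial : ℚ))⁻¹) • ∏ i, g (i.1 + 1) ^ a i := by
    refine Finset.sum_congr rfl fun a ha' => ?_
    have haS := Finset.mem_of_mem_erase ha'
    have hane := Finset.ne_of_mem_erase ha'
    have hai₀ : a i₀ = 0 := by
      by_contra h0
      exact hane (eq_deltaF hn (Finset.mem_filter.mp haS).2 h0)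
    congr 1
    refine Finset.prod_congr rfl fun i _ => ?_
    by_cases h : i.1 + 1 = n
    · have hii : i = i₀ := Fin.ext (by simp [hi₀def]; omega)
      rw [hii, hai₀, pow_zero, pow_zero]
    · rw [if_neg h]
  rw [hterm0, smul_zero, zero_add, hsame, hfac1, htermg, one_smul, add_comm,
    add_sub_cancel_right]

end LadderAux


/-- In the Connes–Kreimer Hopf algebra of rooted trees — here axiomatized through the
ladders `l_n`, `l_0 = 1`, with the cut coproduct `Δ(l_n) = Σ_{j=0}^{n} l_j ⊗ l_{n-j}` —
the primitive elements defined by `P_1 = l_1`, `P_n = l_n − Ψ_n(P_1, ..., P_{n−1}, 0)`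
satisfy the closed formula
`P_n = Σ_{a₁ + 2a₂ + ... + n aₙ = n} (−1)^{a₁+...+aₙ+1}
((a₁+...+aₙ−1)!/(a₁!...aₙ!)) l_1^{a₁} ... l_n^{aₙ}`. -/
theorem ladder_P_closed_formula
    (H : Type*) [CommRing H] [Bialgebra ℚ H]
    (l : ℕ → H) (hl0 : l 0 = 1)
    (hl : ∀ n,
      (Coalgebra.comul (l n) : H ⊗[ℚ] H)
        = ∑ j ∈ Finset.range (n + 1), l j ⊗ₜ[ℚ] l (n - j))
    (P : ℕ → H) (hP1 : P 1 = l 1)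
    (hPrec : ∀ n, 2 ≤ n →
      P n = l n - MvPolynomial.aeval
        (fun i : Fin n => if i.1 + 1 = n then 0 else P (i.1 + 1)) (Psi n)) :
    ∀ n, 1 ≤ n →
      P n = ∑ a ∈ (Fintype.piFinset fun _ : Fin n => Finset.range (n + 1)).filter
          (fun a => ∑ i, (i.1 + 1) * a i = n),
        ((-1 : ℚ) ^ ((∑ i, a i) + 1) *
            (((∑ i, a i) - 1).factorial : ℚ) / ∏ i, ((a i).factorial : ℚ)) •
          ∏ i, l (i.1 + 1) ^ a i := by
  intro n
  induction n using Nat.strong_induction_on with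
  | _ n ih =>
    intro hn
    rw [← LadderAux.logS_coeff_closed l hn]
    rcases eq_or_lt_of_le hn with h1 | h2
    · subst h1
      rw [hP1]
      exact (LadderAux.logS_coeff_one l).symm
    · have hn2 : 2 ≤ n := h2
      rw [hPrec n hn2]
      have haeval : (MvPolynomial.aeval
          fun i : Fin n => if i.1 + 1 = n then 0 else P (i.1 + 1)) (Psi n)
          = ∑ a ∈ (Fintype.piFinset fun _ : Fin n => Finset.range (n + 1)).filter
              (fun a => ∑ i, (i.1 + 1) * a i = n),
            ((∏ i, ((a i).factorial : ℚ))⁻¹) •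
              ∏ i, (if i.1 + 1 = n then 0 else
                PowerSeries.coeff (R := H) (i.1 + 1) (LadderAux.logS (LadderAux.Lser l))) ^ a i := by
        rw [Psi, map_sum]
        refine Finset.sum_congr rfl fun a ha => ?_
        rw [map_smul, map_prod]
        congr 1
        refine Finset.prod_congr rfl fun i _ => ?_
        rw [map_pow, MvPolynomial.aeval_X]
        congr 1
        by_cases h : i.1 + 1 = n
        · rw [if_pos h, if_pos h]
        · rw [if_neg h, if_neg h]
          have hlt : i.1 + 1 < n := by have := i.isLt; omega
          rw [ih (i.1 + 1) hlt (by omega), ← LadderAux.logS_coeff_closed l (by omega)]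
      have hsplit := LadderAux.sum_split (H := H) (n := n) (by omega)
        (fun m => PowerSeries.coeff (R := H) m (LadderAux.logS (LadderAux.Lser l)))
      beta_reduce at hsplit
      rw [haeval, hsplit, ← LadderAux.exp_expand l (by omega), sub_sub_cancel]
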